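/- Let L be a countable one-sorted first-order language and let No_L be an L-structure whose universe is the class No of all surreal numbers. Then for every cardinal μ there exists a cardinal κ with cofinality cf(κ) ≥ μ such that the set No(κ) of surreal numbers of birthday less than κ is the underlying set of an elementary substructure of No_L. In other words, there are cardinals κ of arbitrarily large cofinality such that No(κ) carries an elementary substructure of No_L. -/

import Mathlib

universe u v w

/-- Conway's pre-games (removed from Mathlib; restored with the old Mathlib definition). -/
inductive SetTheory.PGame : Type (u + 1)
  | mk : ∀ α β : Type u, (α → SetTheory.PGame) → (β → SetTheory.PGame) → SetTheory.PGame

/-- The pair `(x ≤ y, x ⧏ y)`, as in old Mathlib's `PGame.le_lf`. -/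
noncomputable def SetTheory.PGame.leLF (x : SetTheory.PGame.{u}) :
    SetTheory.PGame.{u} → Prop × Prop :=
  SetTheory.PGame.rec (motive := fun _ => SetTheory.PGame.{u} → Prop × Prop)
    (fun _ _ _ _ ihxL ihxR y =>
      SetTheory.PGame.rec (motive := fun _ => Prop × Prop)
        (fun yl yr yL yR ihyL ihyR =>
          ((∀ i, (ihxL i (SetTheory.PGame.mk yl yr yL yR)).2) ∧ ∀ j, (ihyR j).2,
            (∃ i, (ihyL i).1) ∨ ∃ j, (ihxR j (SetTheory.PGame.mk yl yr yL yR)).1)) y) x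

/-- `x ≤ y` on pre-games. -/
def SetTheory.PGame.Le (x y : SetTheory.PGame.{u}) : Prop := (SetTheory.PGame.leLF x y).1

/-- `x < y` on pre-games (old Mathlib's preorder: `x ≤ y ∧ ¬ y ≤ x`). -/
def SetTheory.PGame.Lt (x y : SetTheory.PGame.{u}) : Prop :=
  SetTheory.PGame.Le x y ∧ ¬ SetTheory.PGame.Le y x

/-- Numeric pre-games, as in old Mathlib. -/
def SetTheory.PGame.Numeric : SetTheory.PGame.{u} → Prop
  | SetTheory.PGame.mk _ _ L R =>
    (∀ i j, SetTheory.PGame.Lt (L i) (R j)) ∧ (∀ i, SetTheory.PGame.Numeric (L i)) ∧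
      ∀ j, SetTheory.PGame.Numeric (R j)

/-- The birthday of a pre-game, as in old Mathlib. -/
noncomputable def SetTheory.PGame.birthday : SetTheory.PGame.{u} → Ordinal.{u}
  | SetTheory.PGame.mk _ _ xL xR =>
    max (Ordinal.lsub.{u, u} fun i => SetTheory.PGame.birthday (xL i))
      (Ordinal.lsub.{u, u} fun i => SetTheory.PGame.birthday (xR i))

/-- The surreal numbers: numeric pre-games modulo `x ≤ y ∧ y ≤ x`, as in old Mathlib. -/
def Surreal : Type (u + 1) :=
  Quot (fun x y : {p : SetTheory.PGame.{u} // p.Numeric} =>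
    SetTheory.PGame.Le x.1 y.1 ∧ SetTheory.PGame.Le y.1 x.1)

/-- The surreal number represented by a numeric pre-game. -/
def Surreal.mk (x : SetTheory.PGame.{u}) (h : x.Numeric) : Surreal.{u} :=
  Quot.mk _ ⟨x, h⟩

open SetTheory Cardinal FirstOrder

/-- The birthday of a surreal number: the least birthday among numeric pregames
representing it. -/
noncomputable def Surreal.birthday (x : Surreal.{u}) : Ordinal.{u} :=
  sInf (SetTheory.PGame.birthday '' {p : SetTheory.PGame.{u} | ∃ h : p.Numeric, Surreal.mk p h = x})

namespace NoKappaAux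

lemma birthday_exists_rep (x : Surreal.{u}) :
    ∃ (p : PGame.{u}) (hp : p.Numeric), Surreal.mk p hp = x ∧ p.birthday = x.birthday := by
  obtain ⟨⟨p, hp⟩, rfl⟩ := Quot.exists_rep x
  have hne : (SetTheory.PGame.birthday ''
      {q : SetTheory.PGame.{u} | ∃ h : q.Numeric, Surreal.mk q h = Quot.mk _ ⟨p, hp⟩}).Nonempty :=
    ⟨p.birthday, ⟨p, ⟨hp, rfl⟩, rfl⟩⟩
  have := csInf_mem hne
  obtain ⟨q, ⟨hq, hqx⟩, hqb⟩ := this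
  exact ⟨q, hq, hqx, hqb⟩

/-- `x ⧏ y` on pre-games. -/
def LF (x y : PGame.{u}) : Prop := (PGame.leLF x y).2

lemma le_mk_mk {α β γ δ : Type u} (L : α → PGame.{u}) (R : β → PGame.{u})
    (L' : γ → PGame.{u}) (R' : δ → PGame.{u}) :
    PGame.Le (PGame.mk α β L R) (PGame.mk γ δ L' R') ↔
      (∀ i, LF (L i) (PGame.mk γ δ L' R')) ∧ ∀ j, LF (PGame.mk α β L R) (R' j) := Iff.rfl

lemma lf_mk_mk {α β γ δ : Type u} (L : α → PGame.{u}) (R : β → PGame.{u})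
    (L' : γ → PGame.{u}) (R' : δ → PGame.{u}) :
    LF (PGame.mk α β L R) (PGame.mk γ δ L' R') ↔
      (∃ i, PGame.Le (PGame.mk α β L R) (L' i)) ∨ ∃ j, PGame.Le (R j) (PGame.mk γ δ L' R') :=
  Iff.rfl

lemma lf_of_le_moveLeft {x : PGame.{u}} {γ δ : Type u} {L' : γ → PGame.{u}}
    {R' : δ → PGame.{u}} (i : γ) (h : PGame.Le x (L' i)) : LF x (PGame.mk γ δ L' R') := by
  cases x with
  | mk α β L R => exact (lf_mk_mk _ _ _ _).2 (Or.inl ⟨i, h⟩)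

lemma lf_of_moveRight_le {y : PGame.{u}} {α β : Type u} {L : α → PGame.{u}}
    {R : β → PGame.{u}} (j : β) (h : PGame.Le (R j) y) : LF (PGame.mk α β L R) y := by
  cases y with
  | mk γ δ L' R' => exact (lf_mk_mk _ _ _ _).2 (Or.inr ⟨j, h⟩)

lemma le_refl' (x : PGame.{u}) : PGame.Le x x := by
  induction x with
  | mk α β L R ihL ihR =>
    exact (le_mk_mk _ _ _ _).2
      ⟨fun i => lf_of_le_moveLeft i (ihL i), fun j => lf_of_moveRight_le j (ihR j)⟩

/-- A pre-game with small sets of options. -/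
noncomputable def mkN (S T : Set PGame.{u}) [Small.{u} S] [Small.{u} T] : PGame.{u} :=
  PGame.mk (Shrink.{u} S) (Shrink.{u} T) (fun i => ((equivShrink S).symm i).1)
    (fun j => ((equivShrink T).symm j).1)

lemma mkN_congr {S S' T T' : Set PGame.{u}} [Small.{u} S] [Small.{u} S'] [Small.{u} T]
    [Small.{u} T'] (h1 : S = S') (h2 : T = T') : mkN S T = mkN S' T' := by
  subst h1 h2; rfl

/-- Normal form of a pre-game (options deduplicated). -/
noncomputable def nrm : PGame.{u} → PGame.{u}
  | PGame.mk _ _ L R => mkN (Set.range fun i => nrm (L i)) (Set.range fun j => nrm (R j))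

lemma nrm_mk {α β : Type u} (L : α → PGame.{u}) (R : β → PGame.{u}) :
    nrm (PGame.mk α β L R) = mkN (Set.range fun i => nrm (L i)) (Set.range fun j => nrm (R j)) := by
  rw [nrm]

/-- Set of left options. -/
def leftSet : PGame.{u} → Set PGame.{u}
  | PGame.mk _ _ L _ => Set.range L

/-- Set of right options. -/
def rightSet : PGame.{u} → Set PGame.{u}
  | PGame.mk _ _ _ R => Set.range R

lemma leftSet_mkN (S T : Set PGame.{u}) [Small.{u} S] [Small.{u} T] : leftSet (mkN S T) = S := by
  ext x
  constructor
  · rintro ⟨i, rfl⟩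
    exact ((equivShrink S).symm i).2
  · intro hx
    exact ⟨equivShrink S ⟨x, hx⟩, by simp⟩

lemma rightSet_mkN (S T : Set PGame.{u}) [Small.{u} S] [Small.{u} T] :
    rightSet (mkN S T) = T := by
  ext x
  constructor
  · rintro ⟨i, rfl⟩
    exact ((equivShrink T).symm i).2
  · intro hx
    exact ⟨equivShrink T ⟨x, hx⟩, by simp⟩

lemma key (p : PGame.{u}) : ∀ r q : PGame.{u}, nrm p = nrm q →
    (PGame.Le p r → PGame.Le q r) ∧ (LF p r → LF q r) ∧ (PGame.Le r p → PGame.Le r q) ∧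
      (LF r p → LF r q) := by
  induction p with
  | mk α β L R ihL ihR =>
  intro r
  induction r with
  | mk γ δ L' R' ihL' ihR' =>
  intro q hq
  cases q with
  | mk α' β' Lq Rq =>
  have hL : (Set.range fun i => nrm (L i)) = Set.range fun i => nrm (Lq i) := by
    have := congrArg leftSet hq
    simpa only [nrm_mk, leftSet_mkN] using this
  have hR : (Set.range fun i => nrm (R i)) = Set.range fun i => nrm (Rq i) := by
    have := congrArg rightSet hq
    simpa only [nrm_mk, rightSet_mkN] using this
  refine ⟨fun h => ?_, fun h => ?_, fun h => ?_, fun h => ?_⟩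
  · rw [le_mk_mk] at h ⊢
    refine ⟨fun i => ?_, fun j => (ihR' j _ hq).2.1 (h.2 j)⟩
    obtain ⟨k, hk⟩ : nrm (Lq i) ∈ Set.range fun i => nrm (L i) := hL ▸ ⟨i, rfl⟩
    exact (ihL k _ _ hk).2.1 (h.1 k)
  · rw [lf_mk_mk] at h ⊢
    rcases h with ⟨i, hi⟩ | ⟨j, hj⟩
    · exact Or.inl ⟨i, (ihL' i _ hq).1 hi⟩
    · obtain ⟨k, hk⟩ : nrm (R j) ∈ Set.range fun i => nrm (Rq i) := hR ▸ ⟨j, rfl⟩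
      exact Or.inr ⟨k, (ihR j _ _ hk.symm).1 hj⟩
  · rw [le_mk_mk] at h ⊢
    refine ⟨fun i => (ihL' i _ hq).2.2.2 (h.1 i), fun j => ?_⟩
    obtain ⟨k, hk⟩ : nrm (Rq j) ∈ Set.range fun i => nrm (R i) := hR ▸ ⟨j, rfl⟩
    exact (ihR k _ _ hk).2.2.2 (h.2 k)
  · rw [lf_mk_mk] at h ⊢
    rcases h with ⟨i, hi⟩ | ⟨j, hj⟩
    · obtain ⟨k, hk⟩ : nrm (L i) ∈ Set.range fun i => nrm (Lq i) := hL ▸ ⟨i, rfl⟩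
      exact Or.inl ⟨k, (ihL i _ _ hk.symm).2.2.1 hi⟩
    · exact Or.inr ⟨j, (ihR' j _ hq).2.2.1 hj⟩

lemma le_of_nrm_eq {p q : PGame.{u}} (h : nrm p = nrm q) : PGame.Le p q :=
  (key q q p h.symm).1 (le_refl' q)

lemma birthday_moveLeft_lt {α β : Type u} (L : α → PGame.{u}) (R : β → PGame.{u}) (i : α) :
    (L i).birthday < (PGame.mk α β L R).birthday := by
  rw [PGame.birthday]
  exact (Ordinal.lt_lsub.{u, u} (fun i => (L i).birthday) i).trans_le (le_max_left _ _)

lemma birthday_moveRight_lt {α β : Type u} (L : α → PGame.{u}) (R : β → PGame.{u}) (j : β) :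
    (R j).birthday < (PGame.mk α β L R).birthday := by
  rw [PGame.birthday]
  exact (Ordinal.lt_lsub.{u, u} (fun j => (R j).birthday) j).trans_le (le_max_right _ _)

lemma small_nrm (o : Ordinal.{u}) : Small.{u} (nrm '' {p : PGame.{u} | p.birthday < o}) := by
  refine Ordinal.induction (p := fun o => Small.{u} (nrm '' {p : PGame.{u} | p.birthday < o})) o ?_
  intro o ih
  haveI : ∀ b : Set.Iio o, Small.{u} (nrm '' {p : PGame.{u} | p.birthday < b.1}) :=
    fun b => ih b.1 b.2
  have hsub : nrm '' {p : PGame.{u} | p.birthday < o} ⊆ ⋃ b : Set.Iio o,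
      Set.range (fun ST : Set (nrm '' {p : PGame.{u} | p.birthday < b.1}) ×
          Set (nrm '' {p : PGame.{u} | p.birthday < b.1}) =>
        mkN (Subtype.val '' ST.1) (Subtype.val '' ST.2)) := by
    rintro _ ⟨p, hp, rfl⟩
    cases p with
    | mk α β L R =>
      refine Set.mem_iUnion.2 ⟨⟨_, hp⟩, ⟨({x | x.1 ∈ Set.range fun i => nrm (L i)},
        {x | x.1 ∈ Set.range fun j => nrm (R j)}), ?_⟩⟩
      rw [nrm_mk]
      apply mkN_congr
      · ext x
        constructor
        · rintro ⟨y, hy, rfl⟩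
          exact hy
        · rintro ⟨i, rfl⟩
          exact ⟨⟨nrm (L i), L i, birthday_moveLeft_lt L R i, rfl⟩, ⟨i, rfl⟩, rfl⟩
      · ext x
        constructor
        · rintro ⟨y, hy, rfl⟩
          exact hy
        · rintro ⟨i, rfl⟩
          exact ⟨⟨nrm (R i), R i, birthday_moveRight_lt L R i, rfl⟩, ⟨i, rfl⟩, rfl⟩
  exact small_subset hsub

instance small_no (o : Ordinal.{u}) : Small.{u} {x : Surreal.{u} // x.birthday < o} := by
  haveI := small_nrm o
  refine small_of_injective (f := fun x : {x : Surreal.{u} // x.birthday < o} =>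
    (⟨nrm (Classical.choose (birthday_exists_rep x.1)), Classical.choose (birthday_exists_rep x.1),
      show _ < o from ((Classical.choose_spec (birthday_exists_rep x.1)).choose_spec.2).trans_lt x.2, rfl⟩ :
        nrm '' {p : PGame.{u} | p.birthday < o})) ?_
  rintro ⟨x, hx⟩ ⟨y, hy⟩ h
  have h' := congrArg Subtype.val h
  simp only at h'
  obtain ⟨hpx, hx1, -⟩ := Classical.choose_spec (birthday_exists_rep x)
  obtain ⟨hpy, hy1, -⟩ := Classical.choose_spec (birthday_exists_rep y)
  apply Subtype.ext
  show x = y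
  rw [← hx1, ← hy1]
  exact Quot.sound ⟨le_of_nrm_eq h', le_of_nrm_eq h'.symm⟩

variable (L : FirstOrder.Language.{v, w}) [L.Structure Surreal.{u}]

open scoped Classical in
/-- Witness bound: for a formula and parameters, the birthday of a chosen witness. -/
noncomputable def witO {n : ℕ} (φ : L.BoundedFormula Empty (n + 1))
    (v : Fin n → Surreal.{u}) : Ordinal.{u} :=
  if hex : ∃ a : Surreal.{u}, φ.Realize (fun e => e.elim) (Fin.snoc v a) then
    hex.choose.birthday + 1 else 0

/-- Requirements with parameters of birthday `< o`. -/
def ReqT (o : Ordinal.{u}) : Type _ :=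
  {r : Σ n : ℕ, L.BoundedFormula Empty (n + 1) × (Fin n → Surreal.{u}) //
    ∀ i, (r.2.2 i).birthday < o}

variable (hL : Countable L.Symbols)

omit [L.Structure Surreal.{u}] in
include hL in
lemma countable_bf (n : ℕ) : Countable (L.BoundedFormula Empty n) := by
  have h1 : #(Σ n : ℕ, L.BoundedFormula Empty n) ≤ ℵ₀ := by
    refine (FirstOrder.Language.BoundedFormula.card_le).trans (max_le le_rfl ?_)
    have hc : L.card ≤ ℵ₀ := show #L.Symbols ≤ ℵ₀ from Cardinal.mk_le_aleph0
    have h2 : Cardinal.lift.{0} L.card ≤ Cardinal.lift.{0} ℵ₀ := Cardinal.lift_le.2 hc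
    simpa using h2
  have : Countable (Σ n : ℕ, L.BoundedFormula Empty n) := Cardinal.mk_le_aleph0_iff.1 h1
  exact Function.Injective.countable
    (f := fun φ : L.BoundedFormula Empty n => (⟨n, φ⟩ : Σ n, L.BoundedFormula Empty n))
    (fun a b h => by simpa using h)

omit [L.Structure Surreal.{u}] in
include hL in
lemma small_reqT (o : Ordinal.{u}) : Small.{u} (ReqT L o) := by
  haveI : ∀ n, Countable (L.BoundedFormula Empty (n + 1)) := fun n => countable_bf L hL (n + 1)
  refine small_of_surjective
    (f := fun r : (Σ n : ℕ, L.BoundedFormula Empty (n + 1) ×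
        (Fin n → {x : Surreal.{u} // x.birthday < o})) =>
      (⟨⟨r.1, r.2.1, fun i => (r.2.2 i).1⟩, fun i => (r.2.2 i).2⟩ : ReqT L o)) ?_
  exact fun r => ⟨⟨r.1.1, r.1.2.1, fun i => ⟨r.1.2.2 i, r.2 i⟩⟩, rfl⟩

/-- Supremum of all witness bounds for parameters of birthday `< o`. -/
noncomputable def GG (o : Ordinal.{u}) : Ordinal.{u} :=
  ⨆ r : ReqT L o, witO L r.1.2.1 r.1.2.2

include hL in
lemma wit_le_GG {n : ℕ} (φ : L.BoundedFormula Empty (n + 1)) (v : Fin n → Surreal.{u})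
    {o : Ordinal.{u}} (h : ∀ i, (v i).birthday < o) : witO L φ v ≤ GG L o := by
  haveI := small_reqT L hL o
  exact Ordinal.le_iSup (fun r : ReqT L o => witO L r.1.2.1 r.1.2.2) ⟨⟨n, φ, v⟩, h⟩

include hL in
lemma GG_mono : Monotone (GG L) := by
  intro o o' h
  haveI := small_reqT L hL o
  haveI := small_reqT L hL o'
  refine Ordinal.iSup_le fun r => ?_
  exact Ordinal.le_iSup (fun r : ReqT L o' => witO L r.1.2.1 r.1.2.2)
    ⟨r.1, fun i => (r.2 i).trans_le h⟩

/-- A strictly inflationary monotone closure function whose values are ordinals of cardinals. -/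
noncomputable def gg (o : Ordinal.{u}) : Ordinal.{u} :=
  (Order.succ (GG L o ⊔ o).card).ord

include hL in
lemma gg_mono : Monotone (gg L) := fun o o' h => by
  unfold gg
  exact Cardinal.ord_le_ord.2 (Order.succ_le_succ
    (Ordinal.card_le_card (sup_le_sup (GG_mono L hL h) h)))

lemma lt_gg (o : Ordinal.{u}) : o < gg L o :=
  Cardinal.lt_ord.2 ((Ordinal.card_le_card le_sup_right).trans_lt (Order.lt_succ _))

lemma GG_lt_gg (o : Ordinal.{u}) : GG L o < gg L o :=
  Cardinal.lt_ord.2 ((Ordinal.card_le_card le_sup_left).trans_lt (Order.lt_succ _))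

lemma succ_card_ord_le_gg (o : Ordinal.{u}) : (Order.succ o.card).ord ≤ gg L o :=
  Cardinal.ord_le_ord.2 (Order.succ_le_succ (Ordinal.card_le_card le_sup_right))

include hL in
lemma lt_nfp_closed {a x : Ordinal.{u}} (hx : x < Ordinal.nfp (gg L) a) :
    gg L x < Ordinal.nfp (gg L) a := by
  obtain ⟨n, hn⟩ := Ordinal.lt_nfp_iff.1 hx
  have h1 : gg L x ≤ (gg L)^[n + 1] a := by
    rw [Function.iterate_succ_apply']
    exact gg_mono L hL hn.le
  have h2 : (gg L)^[n + 1] a < (gg L)^[n + 2] a := by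
    rw [Function.iterate_succ_apply' (gg L) (n + 1)]
    exact lt_gg L _
  exact (h1.trans_lt h2).trans_le (Ordinal.iterate_le_nfp _ _ _)

include hL in
lemma deriv_closed {c : Ordinal.{u}} (hc : Order.IsSuccLimit c) {x : Ordinal.{u}}
    (hx : x < Ordinal.deriv (gg L) c) : gg L x < Ordinal.deriv (gg L) c := by
  haveI : Small.{u} {b : Ordinal.{u} // b < c} := inferInstanceAs (Small.{u} (Set.Iio c))
  rw [Ordinal.deriv_limit _ hc] at hx ⊢
  rw [Ordinal.lt_iSup_iff] at hx
  obtain ⟨⟨a, ha⟩, hxa⟩ := hx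
  have h1 : x < Ordinal.nfp (gg L) (Order.succ (Ordinal.deriv (gg L) a)) :=
    hxa.trans ((Order.lt_succ _).trans_le (Ordinal.le_nfp _ _))
  have h2 : gg L x < Ordinal.deriv (gg L) (Order.succ a) := by
    rw [Ordinal.deriv_succ]
    exact lt_nfp_closed L hL h1
  exact h2.trans_le (Ordinal.le_iSup (fun b : {b : Ordinal.{u} // b < c} =>
    Ordinal.deriv (gg L) b.1) ⟨Order.succ a, hc.succ_lt ha⟩)

end NoKappaAux

open NoKappaAux

/-- **Lemma 2.** Let `L` be a countable one-sorted language and `No_L` an `L`-structure with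
universe the surreal numbers. Then there are cardinals `κ` of arbitrarily large cofinality
such that `No(κ)`, the set of surreals of birthday `< κ`, is the underlying set of an
elementary substructure of `No_L`. -/
theorem exists_elementarySubstructure_noKappa (L : FirstOrder.Language.{v, w})
    (hL : Countable L.Symbols) [L.Structure Surreal.{u}] (μ : Cardinal.{u}) :
    ∃ κ : Cardinal.{u}, μ ≤ κ.ord.cof ∧
      ∃ S : L.ElementarySubstructure Surreal.{u},
        (S : Set Surreal.{u}) = {x : Surreal.{u} | Surreal.birthday x < κ.ord} := by
  classical
  set c : Cardinal.{u} := Order.succ (μ ⊔ ℵ₀) with hc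
  have hreg : c.IsRegular := Cardinal.isRegular_succ le_sup_right
  have hclim : Order.IsSuccLimit c.ord := Cardinal.isSuccLimit_ord hreg.aleph0_le
  set D : Ordinal.{u} := Ordinal.deriv (gg L) c.ord with hD
  have hclosed : ∀ x < D, gg L x < D := fun x hx => deriv_closed L hL hclim hx
  have hcof : D.cof = c := by
    rw [hD, Ordinal.cof_map_of_isNormal (Ordinal.isNormal_deriv (gg L)) hclim]
    exact hreg.cof_eq
  have hord : D.card.ord = D := by
    refine le_antisymm (Cardinal.ord_card_le D) (le_of_forall_lt fun x hx => ?_)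
    rw [Cardinal.lt_ord]
    have h1 : (Order.succ x.card).ord ≤ gg L x := succ_card_ord_le_gg L x
    have h2 : (Order.succ x.card).ord < D := h1.trans_lt (hclosed x hx)
    have h3 : Order.succ x.card ≤ D.card := by
      have := Ordinal.card_le_card h2.le
      rwa [Cardinal.card_ord] at this
    exact (Order.lt_succ _).trans_le h3
  -- key: any finite family of surreals of birthday < D has birthdays below some o < D
  have hparam : ∀ {n : ℕ} (v : Fin n → Surreal.{u}), (∀ i, (v i).birthday < D) →
      ∃ o < D, ∀ i, (v i).birthday < o := by
    intro n v hv
    have hsup : (⨆ i, (v i).birthday) < D := by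
      refine Ordinal.iSup_lt_ord_lift ?_ hv
      rw [hcof]
      simpa using hreg.nat_lt n
    refine ⟨Order.succ (⨆ i, (v i).birthday), ?_,
      fun i => (Ordinal.le_iSup (fun i => (v i).birthday) i).trans_lt (Order.lt_succ _)⟩
    exact (Order.succ_le_of_lt (lt_gg L _)).trans_lt (hclosed _ hsup)
  -- witness property
  have hwit : ∀ {n : ℕ} (φ : L.BoundedFormula Empty (n + 1)) (v : Fin n → Surreal.{u}),
      (∀ i, (v i).birthday < D) →
      ∀ (hex : ∃ a : Surreal.{u}, φ.Realize (fun e => e.elim) (Fin.snoc v a)),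
      hex.choose.birthday < D := by
    intro n φ v hv hex
    obtain ⟨o, ho, hvo⟩ := hparam v hv
    have h1 : witO L φ v ≤ GG L o := wit_le_GG L hL φ v hvo
    unfold witO at h1
    rw [dif_pos hex] at h1
    have h2 : GG L o < D := (GG_lt_gg L o).trans (hclosed o ho)
    calc hex.choose.birthday < hex.choose.birthday + 1 := by
            rw [Ordinal.add_one_eq_succ]; exact Order.lt_succ _
      _ ≤ GG L o := h1
      _ < D := h2
  have fun_mem : ∀ {n : ℕ} (f : L.Functions n),
      Language.ClosedUnder f {x : Surreal.{u} | x.birthday < D} := by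
    intro n f v hv
    set t1 : L.Term (Empty ⊕ Fin (n + 1)) :=
      Language.Term.func f (fun i => Language.Term.var (Sum.inr i.castSucc)) with ht1
    set t2 : L.Term (Empty ⊕ Fin (n + 1)) := Language.Term.var (Sum.inr (Fin.last n)) with ht2
    set φ : L.BoundedFormula Empty (n + 1) := t1.bdEqual t2 with hφ
    have hreal : ∀ a : Surreal.{u},
        (φ.Realize (fun e => e.elim) (Fin.snoc v a) ↔ Language.Structure.funMap f v = a) := by
      intro a
      simp [hφ, ht1, ht2, Language.Term.realize, Fin.snoc_castSucc, Fin.snoc_last]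
    have hex : ∃ a : Surreal.{u}, φ.Realize (fun e => e.elim) (Fin.snoc v a) :=
      ⟨_, (hreal _).2 rfl⟩
    have hchoose : Language.Structure.funMap f v = hex.choose := (hreal _).1 hex.choose_spec
    have : hex.choose.birthday < D := hwit φ v hv hex
    show (Language.Structure.funMap f v).birthday < D
    rwa [hchoose]
  let S : L.Substructure Surreal.{u} :=
    { carrier := {x : Surreal.{u} | x.birthday < D}
      fun_mem := fun_mem }
  refine ⟨D.card, ?_, S.toElementarySubstructure ?_, ?_⟩
  · rw [hord, hcof, hc]
    exact le_sup_left.trans (Order.le_succ _)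
  · intro n φ x a ha
    have hex : ∃ b : Surreal.{u},
        φ.Realize (fun e => e.elim) (Fin.snoc (Subtype.val ∘ x) b) :=
      ⟨a, by convert ha using 2⟩
    have hb : hex.choose.birthday < D :=
      hwit φ (Subtype.val ∘ x)
        (fun i => show ((x i : Surreal.{u})).birthday < D from (x i).2) hex
    refine ⟨⟨hex.choose, hb⟩, ?_⟩
    have := hex.choose_spec
    convert this using 2
  · rw [hord]
    rfl
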